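/- Let f : ℤ_N → ℂ be supported in E ⊆ ℤ_N and suppose the values of its DFT f̂ are missing on a set M ⊆ ℤ_N with |E|·|M| < N/2. Then f is the unique function supported in E whose DFT agrees with f̂ outside M; equivalently, if g is supported in a set of size at most |E| and ĝ = f̂ off M, then g = f. -/

import Mathlib

open scoped BigOperators Classical
noncomputable section

open ZMod Finset

/-- One-dimensional DFT on ℤ_N with unitary normalization. -/
def dft1 (N : ℕ) [NeZero N] (f : ZMod N → ℂ) : ZMod N → ℂ :=
  fun m => ((1 / Real.sqrt N : ℝ) : ℂ) *
    ∑ t : ZMod N, f t *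
      Complex.exp (-2 * Real.pi * Complex.I * (((m.val * t.val : ℕ) : ℂ) / (N : ℂ)))

lemma dft1_eq (N : ℕ) [NeZero N] (f : ZMod N → ℂ) (m : ZMod N) :
    dft1 N f m = ((1 / Real.sqrt N : ℝ) : ℂ) * ZMod.dft f m := by
  rw [dft1, ZMod.dft_apply]
  congr 1
  refine Finset.sum_congr rfl fun t _ => ?_
  rw [smul_eq_mul, mul_comm (stdAddChar _)]
  congr 1
  have h1 : (-(t * m) : ZMod N) = ((-(m.val * t.val : ℕ) : ℤ) : ZMod N) := by
    push_cast
    rw [ZMod.natCast_val, ZMod.natCast_val, ZMod.cast_id, ZMod.cast_id]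
    ring
  rw [h1, ZMod.stdAddChar_coe]
  congr 1
  push_cast
  ring

/-- Discrete uncertainty principle. -/
lemma uncertainty (N : ℕ) [NeZero N] (h : ZMod N → ℂ) (hne : h ≠ 0) :
    (N : ℝ) ≤ ((Finset.univ.filter fun t : ZMod N => h t ≠ 0).card : ℝ) *
      ((Finset.univ.filter fun m : ZMod N => ZMod.dft h m ≠ 0).card : ℝ) := by
  set S := Finset.univ.filter fun t : ZMod N => h t ≠ 0 with hS
  set T := Finset.univ.filter fun m : ZMod N => ZMod.dft h m ≠ 0 with hT
  obtain ⟨t0, ht0⟩ : ∃ t0, h t0 ≠ 0 := by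
    by_contra hc; push_neg at hc; exact hne (funext fun t => hc t)
  obtain ⟨t, -, ht⟩ := Finset.exists_max_image Finset.univ
    (fun t => ‖h t‖) ⟨t0, Finset.mem_univ t0⟩
  set A := ‖h t‖ with hA
  have hApos : 0 < A := lt_of_lt_of_le (by simpa using ht0) (ht t0 (Finset.mem_univ t0))
  -- bound on the Fourier transform
  have hB : ∀ m : ZMod N, ‖ZMod.dft h m‖ ≤ (S.card : ℝ) * A := by
    intro m
    rw [ZMod.dft_apply]
    calc ‖∑ j : ZMod N, stdAddChar (-(j * m)) • h j‖
        ≤ ∑ j : ZMod N, ‖stdAddChar (-(j * m)) • h j‖ := by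
          exact norm_sum_le _ _
      _ = ∑ j : ZMod N, ‖h j‖ := by
          refine Finset.sum_congr rfl fun j _ => ?_
          rw [smul_eq_mul, norm_mul, ZMod.stdAddChar_apply, Circle.norm_coe, one_mul]
      _ = ∑ j ∈ S, ‖h j‖ := by
          refine (Finset.sum_filter_of_ne fun j _ hj => ?_).symm
          intro hz; rw [hz] at hj; simp at hj
      _ ≤ ∑ _j ∈ S, A := Finset.sum_le_sum fun j _ => ht j (Finset.mem_univ j)
      _ = (S.card : ℝ) * A := by rw [Finset.sum_const, nsmul_eq_mul]
  -- inversion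
  have hinv : h t = (N : ℂ)⁻¹ • ∑ m : ZMod N, stdAddChar (m * t) • ZMod.dft h m := by
    have := ZMod.invDFT_apply (N := N) (ZMod.dft h) t
    rwa [LinearEquiv.symm_apply_apply] at this
  have habs : ‖∑ m : ZMod N, stdAddChar (m * t) • ZMod.dft h m‖
      ≤ (T.card : ℝ) * ((S.card : ℝ) * A) := by
    calc ‖∑ m : ZMod N, stdAddChar (m * t) • ZMod.dft h m‖
        ≤ ∑ m : ZMod N, ‖stdAddChar (m * t) • ZMod.dft h m‖ :=
          norm_sum_le _ _
      _ = ∑ m : ZMod N, ‖ZMod.dft h m‖ := by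
          refine Finset.sum_congr rfl fun m _ => ?_
          rw [smul_eq_mul, norm_mul, ZMod.stdAddChar_apply, Circle.norm_coe, one_mul]
      _ = ∑ m ∈ T, ‖ZMod.dft h m‖ := by
          refine (Finset.sum_filter_of_ne fun m _ hm => ?_).symm
          intro hz; rw [hz] at hm; simp at hm
      _ ≤ ∑ _m ∈ T, (S.card : ℝ) * A := Finset.sum_le_sum fun m _ => hB m
      _ = (T.card : ℝ) * ((S.card : ℝ) * A) := by rw [Finset.sum_const, nsmul_eq_mul]
  have key : A ≤ (N : ℝ)⁻¹ * ((T.card : ℝ) * ((S.card : ℝ) * A)) := by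
    calc A = ‖(N : ℂ)⁻¹ • ∑ m : ZMod N, stdAddChar (m * t) • ZMod.dft h m‖ := by
          rw [hA, ← hinv]
      _ = (N : ℝ)⁻¹ * ‖∑ m : ZMod N, stdAddChar (m * t) • ZMod.dft h m‖ := by
          rw [smul_eq_mul, norm_mul, norm_inv, Complex.norm_natCast]
      _ ≤ _ := mul_le_mul_of_nonneg_left habs (by positivity)
  have hNpos : (0 : ℝ) < N := by exact_mod_cast Nat.pos_of_ne_zero (NeZero.ne N)
  have : (N : ℝ) * A ≤ (T.card : ℝ) * ((S.card : ℝ) * A) := by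
    have := mul_le_mul_of_nonneg_left key hNpos.le
    rwa [← mul_assoc, mul_inv_cancel₀ hNpos.ne', one_mul] at this
  have : (N : ℝ) ≤ (T.card : ℝ) * (S.card : ℝ) := by
    have h2 : (N : ℝ) * A ≤ (T.card : ℝ) * (S.card : ℝ) * A := by
      rw [mul_assoc]; exact this
    exact le_of_mul_le_mul_right h2 hApos
  linarith [this]

/-- Donoho–Stark uniqueness: if `f` is supported in `E`, its DFT is missing on `M`, and
`|E|·|M| < N/2`, then any `g` supported on a set of size at most `|E|` whose DFT agrees
with that of `f` off `M` equals `f`. -/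
theorem donoho_stark_unique_recovery (N : ℕ) [NeZero N] (f : ZMod N → ℂ)
    (E M : Finset (ZMod N))
    (hsupp : ∀ t : ZMod N, f t ≠ 0 → t ∈ E)
    (hEM : ((E.card : ℝ) * (M.card : ℝ)) < (N : ℝ) / 2) :
    ∀ g : ZMod N → ℂ,
      (Finset.univ.filter fun t : ZMod N => g t ≠ 0).card ≤ E.card →
      (∀ m : ZMod N, m ∉ M → dft1 N g m = dft1 N f m) →
      g = f := by
  intro g hgcard hgM
  by_contra hgf
  set h : ZMod N → ℂ := g - f with hh
  have hne : h ≠ 0 := sub_ne_zero.mpr hgf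
  have hsqrt : ((1 / Real.sqrt N : ℝ) : ℂ) ≠ 0 := by
    have : (0 : ℝ) < Real.sqrt N := Real.sqrt_pos.mpr
      (by exact_mod_cast Nat.pos_of_ne_zero (NeZero.ne N))
    simp [this.ne']
  -- Fourier support of h is inside M
  have hFsupp : ∀ m : ZMod N, m ∉ M → ZMod.dft h m = 0 := by
    intro m hm
    have := hgM m hm
    rw [dft1_eq, dft1_eq] at this
    have h2 : ZMod.dft g m = ZMod.dft f m := mul_left_cancel₀ hsqrt this
    have : ZMod.dft h m = ZMod.dft g m - ZMod.dft f m := by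
      rw [hh, map_sub]; rfl
    rw [this, h2, sub_self]
  -- supports
  set S := Finset.univ.filter fun t : ZMod N => h t ≠ 0 with hS
  set T := Finset.univ.filter fun m : ZMod N => ZMod.dft h m ≠ 0 with hT
  have hTM : T ⊆ M := by
    intro m hm
    rw [hT, Finset.mem_filter] at hm
    by_contra hc
    exact hm.2 (hFsupp m hc)
  have hScard : S.card ≤ (Finset.univ.filter fun t : ZMod N => g t ≠ 0).card + E.card := by
    have hsub : S ⊆ (Finset.univ.filter fun t : ZMod N => g t ≠ 0) ∪ E := by
      intro t htS
      rw [hS, Finset.mem_filter] at htS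
      rcases htS with ⟨-, hts⟩
      by_contra hc
      rw [Finset.mem_union, Finset.mem_filter] at hc
      push_neg at hc
      have hg0 : g t = 0 := hc.1 (Finset.mem_univ t)
      have hf0 : f t = 0 := by
        by_contra hfz; exact hc.2 (hsupp t hfz)
      exact hts (by simp [hh, hg0, hf0])
    calc S.card ≤ ((Finset.univ.filter fun t : ZMod N => g t ≠ 0) ∪ E).card :=
          Finset.card_le_card hsub
      _ ≤ _ := Finset.card_union_le _ _
  have hS2E : S.card ≤ 2 * E.card := by omega
  have := uncertainty N h hne
  have hTcard : (T.card : ℝ) ≤ (M.card : ℝ) := by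
    exact_mod_cast Finset.card_le_card hTM
  have hScardR : (S.card : ℝ) ≤ 2 * (E.card : ℝ) := by exact_mod_cast hS2E
  have hnn : (0 : ℝ) ≤ (T.card : ℝ) := by positivity
  have h1 : (N : ℝ) ≤ 2 * (E.card : ℝ) * (M.card : ℝ) := by
    calc (N : ℝ) ≤ (S.card : ℝ) * (T.card : ℝ) := this
      _ ≤ (2 * (E.card : ℝ)) * (M.card : ℝ) := by
          apply mul_le_mul hScardR hTcard hnn (by positivity)
  linarith
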